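/- Let F be a properly parametrized Markov multi-map with associated SFT Σ_M, and let D={a∈A₀: R₀(a)∩P≠∅}. Suppose D is nonempty and sup{ℓ(I_{u₀⋯u_n})/ℓ(I_{u₀⋯u_{n−1}}) : u∈L, u_{n−1}∈D, ℓ(I_{u₀⋯u_{n−1}})≠0} < 1. If there exists an irreducible component C₀⊂A containing A₀, then Σ_M satisfies the Coding Condition (CC). -/

import Mathlib

open Set Topology

/-! ### Generic dynamical notions -/

/-- Topological transitivity of a map. -/
def TopTransitive {α : Type*} [TopologicalSpace α] (T : α → α) : Prop :=
  ∀ U V : Set α, IsOpen U → IsOpen V → U.Nonempty → V.Nonempty →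
    ∃ n : ℕ, (T^[n] '' U ∩ V).Nonempty

/-- Topological mixing of a map. -/
def TopMixing {α : Type*} [TopologicalSpace α] (T : α → α) : Prop :=
  ∀ U V : Set α, IsOpen U → IsOpen V → U.Nonempty → V.Nonempty →
    ∃ N : ℕ, ∀ n, N ≤ n → (T^[n] '' U ∩ V).Nonempty

/-- Density of the set of periodic points of a map. -/
def DensePeriodic {α : Type*} [TopologicalSpace α] (T : α → α) : Prop :=
  Dense {x : α | ∃ p : ℕ, 1 ≤ p ∧ T^[p] x = x}

/-- The metric `d(x,y) = sup_k |x_k - y_k|/(k+1)` on sequence spaces. -/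
noncomputable def dseq (x y : ℕ → ℝ) : ℝ := ⨆ k : ℕ, |x k - y k| / ((k : ℝ) + 1)

/-- The specification property for a map `T` with respect to a distance function `d`. -/
def SpecProp {α : Type*} (T : α → α) (d : α → α → ℝ) : Prop :=
  ∀ ε : ℝ, 0 < ε → ∃ N : ℕ, ∀ l : ℕ, ∀ x : Fin (l + 1) → α, ∀ a b : Fin (l + 1) → ℕ,
    (∀ k, 1 ≤ a k) → (∀ k, a k ≤ b k) →
    (∀ k : Fin l, b k.castSucc < a k.succ ∧ b k.castSucc + N ≤ a k.succ) →
    ∀ p : ℕ, b (Fin.last l) + N ≤ p →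
      ∃ z : α, T^[p] z = z ∧
        ∀ k : Fin (l + 1), ∀ i : ℕ, a k ≤ i → i ≤ b k → d (T^[i] z) (T^[i] (x k)) < ε

/-- The length `ℓ` of a (possibly degenerate) interval. -/
noncomputable def intervalLen (I : Set ℝ) : ℝ := sSup I - sInf I

/-! ### Markov multi-maps -/

/-- A Markov multi-map of the interval, given by a tuple
`(P, A₀, A₁, A₂, D, R, {f_a})` as in the paper, together with the derived data
(inverse maps `g`, interiors `D0`, `R0`, graphs `Gr`, `G0`) which are uniquely
determined by the defining equations below. -/
structure MarkovMultiMap where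
  A : Type
  finA : Finite A
  A0 : Set A
  A1 : Set A
  A2 : Set A
  P : Finset ℝ
  D : A → Set ℝ
  R : A → Set ℝ
  f : A → ℝ → ℝ
  g : A → ℝ → ℝ
  D0 : A → Set ℝ
  R0 : A → Set ℝ
  Gr : A → Set (ℝ × ℝ)
  G0 : A → Set (ℝ × ℝ)
  P_zero : (0 : ℝ) ∈ P
  P_one : (1 : ℝ) ∈ P
  P_sub : (P : Set ℝ) ⊆ Set.Icc 0 1
  A_cover : ∀ a : A, a ∈ A0 ∨ a ∈ A1 ∨ a ∈ A2
  A01 : A0 ∩ A1 = ∅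
  A02 : A0 ∩ A2 = ∅
  A12 : A1 ∩ A2 = ∅
  D_A0 : ∀ a ∈ A0, ∃ p ∈ P, ∃ q ∈ P, p < q ∧ (∀ r ∈ P, ¬(p < r ∧ r < q)) ∧ D a = Set.Icc p q
  D_A12 : ∀ a ∈ A1 ∪ A2, ∃ p ∈ P, D a = {p}
  R_A0 : ∀ a ∈ A0, ∃ u ∈ P, ∃ v ∈ P, u < v ∧ R a = Set.Icc u v
  R_A1 : ∀ a ∈ A1, ∃ u ∈ P, ∃ v ∈ P, u < v ∧ R a = Set.Icc u v ∧
    Set.Icc u v ∩ (P : Set ℝ) = {u, v}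
  R_A2 : ∀ a ∈ A2, ∃ u ∈ P, R a = {u}
  f_homeo : ∀ a ∈ A0, ContinuousOn (f a) (D a) ∧ Set.BijOn (f a) (D a) (R a)
  g_A0 : ∀ a ∈ A0, (∀ x ∈ D a, g a (f a x) = x) ∧ ∀ y ∈ R a, g a y ∈ D a ∧ f a (g a y) = y
  g_A12 : ∀ a ∈ A1 ∪ A2, ∀ y ∈ R a, g a y ∈ D a
  cover : Set.Icc (0 : ℝ) 1 = ⋃ a : A, D a
  D0_A0 : ∀ a ∈ A0, D0 a = interior (D a)
  D0_A12 : ∀ a ∈ A1 ∪ A2, D0 a = D a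
  R0_A01 : ∀ a ∈ A0 ∪ A1, R0 a = interior (R a)
  R0_A2 : ∀ a ∈ A2, R0 a = R a
  Gr_A0 : ∀ a ∈ A0, Gr a = {q : ℝ × ℝ | q.1 ∈ D a ∧ q.2 = f a q.1}
  Gr_A12 : ∀ a ∈ A1 ∪ A2, Gr a = (D a) ×ˢ (R a)
  G0_A0 : ∀ a ∈ A0, G0 a = {q : ℝ × ℝ | q.1 ∈ D0 a ∧ q.2 = f a q.1}
  G0_A1 : ∀ a ∈ A1, G0 a = (D a) ×ˢ (R0 a)
  G0_A2 : ∀ a ∈ A2, G0 a = Gr a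

namespace MarkovMultiMap

variable (M : MarkovMultiMap)

/-- The graph `G(F)` of the multi-map. -/
def GF : Set (ℝ × ℝ) := ⋃ a : M.A, M.Gr a

/-- `F` is properly parametrized: the sets `G₀(a)` partition `G(F)`. -/
def ProperlyParametrized : Prop :=
  (⋃ a : M.A, M.G0 a) = M.GF ∧ ∀ a b : M.A, a ≠ b → Disjoint (M.G0 a) (M.G0 b)

/-- The forward trajectory space `X`. -/
def X : Set (ℕ → ℝ) :=
  {x | (∀ k, x k ∈ Set.Icc (0 : ℝ) 1) ∧ ∀ k, (x k, x (k + 1)) ∈ M.GF}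

/-- The left-shift map `T` on the forward trajectory space. -/
def shift : M.X → M.X :=
  fun x => ⟨fun k => x.1 (k + 1), ⟨fun k => x.2.1 (k + 1), fun k => x.2.2 (k + 1)⟩⟩

/-- The inverse trajectory (inverse limit) space `Y`, encoded by `y k = y_{-k}`. -/
def Y : Set (ℕ → ℝ) :=
  {y | (∀ k, y k ∈ Set.Icc (0 : ℝ) 1) ∧ ∀ k, (y (k + 1), y k) ∈ M.GF}

/-- The right-shift map `S` on the inverse limit space (in the encoding `y k = y_{-k}`). -/
def ishift : M.Y → M.Y :=
  fun y => ⟨fun k => y.1 (k + 1), ⟨fun k => y.2.1 (k + 1), fun k => y.2.2 (k + 1)⟩⟩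

/-- The space `X_n` of finite trajectories of length `n`. -/
def finTraj (n : ℕ) : Set (Fin n → ℝ) :=
  {x | (∀ i, x i ∈ Set.Icc (0 : ℝ) 1) ∧
    ∀ i : Fin n, ∀ h : (i : ℕ) + 1 < n, (x i, x ⟨(i : ℕ) + 1, h⟩) ∈ M.GF}

/-- The associated nearest-neighbor SFT `Σ_M`. -/
def SFT : Set (ℕ → M.A) := {a | ∀ n : ℕ, M.D0 (a (n + 1)) ⊆ M.R0 (a n)}

/-- The word `u` (of length `n`) occurs in some point of `Z`. -/
def WordIn {n : ℕ} (u : Fin n → M.A) (Z : Set (ℕ → M.A)) : Prop :=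
  ∃ z ∈ Z, ∃ m : ℕ, ∀ i : Fin n, u i = z (m + (i : ℕ))

/-- `L_n`, the words of length `n` in the language of `Σ_M`. -/
def Lang (n : ℕ) : Set (Fin n → M.A) := {u | M.WordIn u M.SFT}

/-- `(x,u)` is a labeled finite trajectory: `(x_k, x_{k+1}) ∈ G(u_k)` for all `k`. -/
def Labeled {n : ℕ} (x : Fin (n + 1) → ℝ) (u : Fin n → M.A) : Prop :=
  ∀ i : Fin n, (x i.castSucc, x i.succ) ∈ M.Gr (u i)

/-- `(x,u)` is a special labeled finite trajectory: `(x_k, x_{k+1}) ∈ G₀(u_k)` for all `k`. -/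
def SpecialLabeled {n : ℕ} (x : Fin (n + 1) → ℝ) (u : Fin n → M.A) : Prop :=
  ∀ i : Fin n, (x i.castSucc, x i.succ) ∈ M.G0 (u i)

/-- A word `u ∈ L_n` is essential if the set of finite trajectories specially labeled
by `u` is open in `X_{n+1}`. -/
def EssentialWord {n : ℕ} (u : Fin n → M.A) : Prop :=
  u ∈ M.Lang n ∧ IsOpen {x : M.finTraj (n + 1) | M.SpecialLabeled x.1 u}

/-- A symbol is essential if it appears in some essential word. -/
def EssentialSymbol (a : M.A) : Prop :=
  ∃ n : ℕ, ∃ u : Fin n → M.A, M.EssentialWord u ∧ ∃ i : Fin n, u i = a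

/-- `A^(e)`, the set of essential symbols. -/
def Ess : Set M.A := {a | M.EssentialSymbol a}

/-- `E`, the set of essential symbolic sequences. -/
def E : Set (ℕ → M.A) := {z ∈ M.SFT | ∀ i : ℕ, z i ∈ M.Ess}

/-- A word all of whose letters lie in `C`, in the language of `Σ_M`. -/
def WordOver {n : ℕ} (u : Fin n → M.A) (C : Set M.A) : Prop :=
  u ∈ M.Lang n ∧ ∀ i, u i ∈ C

/-- There is a word of length `n+1` over `C` beginning with `a` and ending with `b`. -/
def WordFromTo (C : Set M.A) (a b : M.A) (n : ℕ) : Prop :=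
  ∃ u : Fin (n + 1) → M.A, M.WordOver u C ∧ u 0 = a ∧ u (Fin.last n) = b

/-- `C ⊆ A` is irreducible. -/
def IrreducibleSet (C : Set M.A) : Prop :=
  ∀ a ∈ C, ∀ b ∈ C, ∃ n : ℕ, M.WordFromTo C a b n

/-- `C` is an irreducible component (a maximal irreducible subset of `A`). -/
def IrreducibleComponent (C : Set M.A) : Prop :=
  M.IrreducibleSet C ∧ ∀ C' : Set M.A, M.IrreducibleSet C' → C ⊆ C' → C' = C

/-- `C ⊆ A` is mixing. -/
def MixingSet (C : Set M.A) : Prop :=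
  ∃ N : ℕ, 1 ≤ N ∧ ∀ a ∈ C, ∀ b ∈ C, ∀ n : ℕ, N ≤ n + 1 → M.WordFromTo C a b n

/-- `C` is a mixing component (a maximal mixing subset of `A`). -/
def MixingComponent (C : Set M.A) : Prop :=
  M.MixingSet C ∧ ∀ C' : Set M.A, M.MixingSet C' → C ⊆ C' → C' = C

/-- The Irreducibility Condition (IC). -/
def IC : Prop := ∃ C : Set M.A, M.IrreducibleComponent C ∧ M.Ess ⊆ C

/-- The Mixing Condition (MC). -/
def MC : Prop := ∃ C : Set M.A, M.MixingComponent C ∧ M.Ess ⊆ C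

/-- `Z` is a subshift of `Σ_M`: shift-invariant and closed in the product of discrete
topologies (closedness phrased combinatorially). -/
def IsSubshift (Z : Set (ℕ → M.A)) : Prop :=
  Z ⊆ M.SFT ∧ (∀ z ∈ Z, (fun k => z (k + 1)) ∈ Z) ∧
  ∀ x : ℕ → M.A, (∀ n : ℕ, ∃ z ∈ Z, ∀ i, i < n → z i = x i) → x ∈ Z

/-- The symbol `a` occurs in some point of `Z`. -/
def SymbolInShift (Z : Set (ℕ → M.A)) (a : M.A) : Prop := ∃ z ∈ Z, ∃ k : ℕ, z k = a

/-- `Z` is transitive on symbols. -/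
def TransitiveOnSymbols (Z : Set (ℕ → M.A)) : Prop :=
  ∀ a b : M.A, M.SymbolInShift Z a → M.SymbolInShift Z b →
    ∃ z ∈ Z, ∃ m n : ℕ, z m = a ∧ z (m + n) = b

end MarkovMultiMap

/-- The composition `g_{u₀} ∘ ⋯ ∘ g_{u_n}` of inverse maps along a list of symbols. -/
def gWordList (M : MarkovMultiMap) : List M.A → ℝ → ℝ
  | [], x => x
  | a :: l, x => M.g a (gWordList M l x)

namespace MarkovMultiMap

/-- The inverse map `g_u` associated to a word `u = u₀⋯u_n`. -/
def gWord (M : MarkovMultiMap) {n : ℕ} (u : Fin (n + 1) → M.A) : ℝ → ℝ :=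
  gWordList M (List.ofFn u)

/-- The interval `I_u = g_u(R(u_n))`. -/
def Iword (M : MarkovMultiMap) {n : ℕ} (u : Fin (n + 1) → M.A) : Set ℝ :=
  M.gWord u '' M.R (u (Fin.last n))

/-- The Coding Condition (CC). -/
def CC (M : MarkovMultiMap) : Prop :=
  ∃ Z : Set (ℕ → M.A), M.IsSubshift Z ∧ M.TransitiveOnSymbols Z ∧
    (∀ y ∈ Set.Icc (0 : ℝ) 1, ∃ a ∈ Z, ∃ x ∈ M.X, x 0 = y ∧
      ∀ i : ℕ, (x i, x (i + 1)) ∈ M.Gr (a i)) ∧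
    (∀ ε : ℝ, 0 < ε → ∃ N : ℕ, ∀ n : ℕ, N ≤ n → ∀ u : Fin (n + 1) → M.A,
      M.WordIn u Z → intervalLen (M.Iword u) < ε)

/-- Uniform equicontinuity of the family `{g_u : u ∈ L(C)}`. -/
def UnifEquicontOn (M : MarkovMultiMap) (C : Set M.A) : Prop :=
  ∀ ε : ℝ, 0 < ε → ∃ δ : ℝ, 0 < δ ∧ ∀ n : ℕ, ∀ u : Fin (n + 1) → M.A, M.WordOver u C →
    ∀ x ∈ M.R (u (Fin.last n)), ∀ y ∈ M.R (u (Fin.last n)),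
      |x - y| < δ → |M.gWord u x - M.gWord u y| < ε

end MarkovMultiMap

/-! ### Auxiliary development for the proof of `stmt16` -/

namespace MarkovMultiMap

instance (M : MarkovMultiMap) : Finite M.A := M.finA
noncomputable instance (M : MarkovMultiMap) : Fintype M.A := Fintype.ofFinite _

variable (M : MarkovMultiMap)

/-- `b` may follow `a` in the associated SFT. -/
def Vp (a b : M.A) : Prop := M.D0 b ⊆ M.R0 a

/-- The set `D` of symbols in `A₀` whose range contains a partition point in
its interior. -/
def Dset : Set M.A := {a | a ∈ M.A0 ∧ (M.R0 a ∩ (M.P : Set ℝ)).Nonempty}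

/-- Good symbols: those not in `A₀` (constant inverse branch) or in `D`. -/
def GoodS : Set M.A := {a | a ∉ M.A0 ∨ a ∈ M.Dset}

lemma mem_A12 {a : M.A} (ha : a ∉ M.A0) : a ∈ M.A1 ∪ M.A2 := by
  rcases M.A_cover a with h | h | h
  · exact absurd h ha
  · exact Or.inl h
  · exact Or.inr h

lemma D_sub_unit (a : M.A) : M.D a ⊆ Set.Icc 0 1 := by
  by_cases ha : a ∈ M.A0
  · obtain ⟨p, hp, q, hq, hpq, _, hD⟩ := M.D_A0 a ha
    rw [hD]
    exact Set.Icc_subset_Icc (M.P_sub hp).1 (M.P_sub hq).2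
  · obtain ⟨p, hp, hD⟩ := M.D_A12 a (M.mem_A12 ha)
    rw [hD]
    simpa using M.P_sub hp

lemma R_cases (a : M.A) :
    (∃ u ∈ M.P, ∃ v ∈ M.P, u < v ∧ M.R a = Set.Icc u v) ∨ ∃ u ∈ M.P, M.R a = {u} := by
  rcases M.A_cover a with h | h | h
  · obtain ⟨u, hu, v, hv, huv, hR⟩ := M.R_A0 a h
    exact Or.inl ⟨u, hu, v, hv, huv, hR⟩
  · obtain ⟨u, hu, v, hv, huv, hR, _⟩ := M.R_A1 a h
    exact Or.inl ⟨u, hu, v, hv, huv, hR⟩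
  · obtain ⟨u, hu, hR⟩ := M.R_A2 a h
    exact Or.inr ⟨u, hu, hR⟩

lemma R_sub_unit (a : M.A) : M.R a ⊆ Set.Icc 0 1 := by
  rcases M.R_cases a with ⟨u, hu, v, hv, _, hR⟩ | ⟨u, hu, hR⟩
  · rw [hR]; exact Set.Icc_subset_Icc (M.P_sub hu).1 (M.P_sub hv).2
  · rw [hR]; simpa using M.P_sub hu

lemma R_nonempty (a : M.A) : (M.R a).Nonempty := by
  rcases M.R_cases a with ⟨u, _, v, _, huv, hR⟩ | ⟨u, _, hR⟩
  · rw [hR]; exact Set.nonempty_Icc.2 huv.le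
  · rw [hR]; exact Set.singleton_nonempty u

lemma R_closed (a : M.A) : IsClosed (M.R a) := by
  rcases M.R_cases a with ⟨u, _, v, _, _, hR⟩ | ⟨u, _, hR⟩
  · rw [hR]; exact isClosed_Icc
  · rw [hR]; exact isClosed_singleton

lemma R0_sub_R (a : M.A) : M.R0 a ⊆ M.R a := by
  rcases M.A_cover a with h | h | h
  · rw [M.R0_A01 a (Or.inl h)]; exact interior_subset
  · rw [M.R0_A01 a (Or.inr h)]; exact interior_subset
  · rw [M.R0_A2 a h]

lemma D0_sub_D (a : M.A) : M.D0 a ⊆ M.D a := by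
  by_cases ha : a ∈ M.A0
  · rw [M.D0_A0 a ha]; exact interior_subset
  · rw [M.D0_A12 a (M.mem_A12 ha)]

lemma g_maps (a : M.A) : ∀ y ∈ M.R a, M.g a y ∈ M.D a := by
  by_cases ha : a ∈ M.A0
  · exact fun y hy => ((M.g_A0 a ha).2 y hy).1
  · exact M.g_A12 a (M.mem_A12 ha)

lemma D_eq_closure_D0 {a : M.A} (ha : a ∈ M.A0) : M.D a = closure (M.D0 a) := by
  obtain ⟨p, _, q, _, hpq, _, hD⟩ := M.D_A0 a ha
  rw [M.D0_A0 a ha, hD, interior_Icc, closure_Ioo hpq.ne]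

lemma Vp_D_sub_R {a b : M.A} (h : M.Vp a b) : M.D b ⊆ M.R a := by
  by_cases hb : b ∈ M.A0
  · rw [M.D_eq_closure_D0 hb]
    exact closure_minimal (h.trans (M.R0_sub_R a)) (M.R_closed a)
  · rw [← M.D0_A12 b (M.mem_A12 hb)]
    exact h.trans (M.R0_sub_R a)

/-- For `a ∈ A₀`, the range together with its interior. -/
lemma R0_A0_eq {a : M.A} (ha : a ∈ M.A0) :
    ∃ u ∈ M.P, ∃ v ∈ M.P, u < v ∧ M.R a = Set.Icc u v ∧ M.R0 a = Set.Ioo u v := by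
  obtain ⟨u, hu, v, hv, huv, hR⟩ := M.R_A0 a ha
  exact ⟨u, hu, v, hv, huv, hR, by rw [M.R0_A01 a (Or.inl ha), hR, interior_Icc]⟩

/-- `p` and `q` are adjacent partition points. -/
def IsAdj (p q : ℝ) : Prop :=
  p ∈ M.P ∧ q ∈ M.P ∧ p < q ∧ ∀ r ∈ M.P, ¬(p < r ∧ r < q)

/-- Every adjacent partition interval is the domain of some `A₀`-symbol. -/
lemma adj_symbol_exists {p q : ℝ} (h : M.IsAdj p q) :
    ∃ a ∈ M.A0, M.D a = Set.Icc p q := by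
  obtain ⟨hp, hq, hpq, hadj⟩ := h
  set x : ℝ := (p + q) / 2 with hx
  have hpx : p < x := by rw [hx]; linarith
  have hxq : x < q := by rw [hx]; linarith
  have hxP : x ∉ (M.P : Set ℝ) := fun hxP => hadj x hxP ⟨hpx, hxq⟩
  have hx01 : x ∈ Set.Icc (0 : ℝ) 1 :=
    ⟨le_trans (M.P_sub hp).1 hpx.le, le_trans hxq.le (M.P_sub hq).2⟩
  have hxU : x ∈ ⋃ a : M.A, M.D a := by rw [← M.cover]; exact hx01
  rw [Set.mem_iUnion] at hxU
  obtain ⟨a', hxa⟩ := hxU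
  by_cases ha : a' ∈ M.A0
  · obtain ⟨p', hp', q', hq', hpq', hadj', hD⟩ := M.D_A0 a' ha
    rw [hD] at hxa
    have hp'x : p' < x := lt_of_le_of_ne hxa.1 (fun e => hxP (e ▸ hp'))
    have hxq' : x < q' := lt_of_le_of_ne hxa.2 (fun e => hxP (e.symm ▸ hq'))
    have hpp' : p = p' := by
      rcases lt_trichotomy p p' with h1 | h1 | h1
      · exact absurd ⟨h1, lt_trans hp'x hxq⟩ (hadj p' hp')
      · exact h1
      · exact absurd ⟨h1, lt_trans hpx hxq'⟩ (hadj' p hp)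
    have hqq' : q = q' := by
      rcases lt_trichotomy q q' with h1 | h1 | h1
      · exact absurd ⟨lt_trans hp'x hxq, h1⟩ (hadj' q hq)
      · exact h1
      · exact absurd ⟨lt_trans hpx hxq', h1⟩ (hadj q' hq')
    exact ⟨a', ha, by rw [hD, hpp', hqq']⟩
  · obtain ⟨p', hp', hD⟩ := M.D_A12 a' (M.mem_A12 ha)
    rw [hD] at hxa
    exact absurd ((Set.mem_singleton_iff.1 hxa) ▸ hp') hxP

/-- Any point of a partition-bounded interval lies in an adjacent subinterval. -/
lemma point_in_adj {u v x : ℝ} (hu : u ∈ M.P) (hv : v ∈ M.P) (huv : u < v)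
    (hx : x ∈ Set.Icc u v) :
    ∃ p q, M.IsAdj p q ∧ x ∈ Set.Icc p q ∧ u ≤ p ∧ q ≤ v := by
  classical
  by_cases hxv : x = v
  · have hS : u ∈ M.P.filter (fun r => r < v) := Finset.mem_filter.2 ⟨hu, huv⟩
    have hSne : (M.P.filter (fun r => r < v)).Nonempty := ⟨u, hS⟩
    obtain ⟨hpP, hpv⟩ := Finset.mem_filter.1 (Finset.max'_mem _ hSne)
    refine ⟨(M.P.filter (fun r => r < v)).max' hSne, v,
      ⟨hpP, hv, hpv, fun r hr hrr => ?_⟩, ?_, Finset.le_max' _ u hS, le_rfl⟩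
    · have hrm : r ∈ M.P.filter (fun r => r < v) := Finset.mem_filter.2 ⟨hr, hrr.2⟩
      exact absurd hrr.1 (not_lt.2 (Finset.le_max' (M.P.filter (fun r => r < v)) r hrm))
    · exact ⟨hxv ▸ hpv.le, hxv ▸ le_rfl⟩
  · have hxv' : x < v := lt_of_le_of_ne hx.2 hxv
    have hS1 : u ∈ M.P.filter (fun r => r ≤ x) := Finset.mem_filter.2 ⟨hu, hx.1⟩
    have hS2 : v ∈ M.P.filter (fun r => x < r) := Finset.mem_filter.2 ⟨hv, hxv'⟩
    have hS1ne : (M.P.filter (fun r => r ≤ x)).Nonempty := ⟨u, hS1⟩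
    have hS2ne : (M.P.filter (fun r => x < r)).Nonempty := ⟨v, hS2⟩
    obtain ⟨hpP, hpx⟩ := Finset.mem_filter.1 (Finset.max'_mem _ hS1ne)
    obtain ⟨hqP, hxq⟩ := Finset.mem_filter.1 (Finset.min'_mem _ hS2ne)
    refine ⟨(M.P.filter (fun r => r ≤ x)).max' hS1ne,
      (M.P.filter (fun r => x < r)).min' hS2ne,
      ⟨hpP, hqP, lt_of_le_of_lt hpx hxq, fun r hr hrr => ?_⟩,
      ⟨hpx, hxq.le⟩, Finset.le_max' _ u hS1, Finset.min'_le _ v hS2⟩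
    rcases le_or_gt r x with h3 | h3
    · have hrm : r ∈ M.P.filter (fun r => r ≤ x) := Finset.mem_filter.2 ⟨hr, h3⟩
      exact absurd hrr.1 (not_lt.2 (Finset.le_max' (M.P.filter (fun r => r ≤ x)) r hrm))
    · have hrm : r ∈ M.P.filter (fun r => x < r) := Finset.mem_filter.2 ⟨hr, h3⟩
      exact absurd hrr.2 (not_lt.2 (Finset.min'_le (M.P.filter (fun r => x < r)) r hrm))

/-- Given any point of a partition-bounded interval, there is an `A₀`-symbol whose
domain contains the point and whose open domain sits inside the open interval. -/
lemma cand_exists {u v x : ℝ} (hu : u ∈ M.P) (hv : v ∈ M.P) (huv : u < v)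
    (hx : x ∈ Set.Icc u v) :
    ∃ b ∈ M.A0, x ∈ M.D b ∧ M.D0 b ⊆ Set.Ioo u v := by
  obtain ⟨p, q, hadj, hxpq, hup, hqv⟩ := M.point_in_adj hu hv huv hx
  obtain ⟨b, hb, hDb⟩ := M.adj_symbol_exists hadj
  refine ⟨b, hb, hDb ▸ hxpq, ?_⟩
  rw [M.D0_A0 b hb, hDb, interior_Icc]
  exact Set.Ioo_subset_Ioo hup hqv

/-- Successors of a non-`D` symbol of `A₀` are in `A₀` and have domain equal to
the range. -/
lemma succ_struct {a b : M.A} (ha : a ∈ M.A0) (hnd : a ∉ M.Dset) (hab : M.Vp a b) :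
    b ∈ M.A0 ∧ M.D b = M.R a := by
  obtain ⟨u, hu, v, hv, huv, hR, hR0⟩ := M.R0_A0_eq ha
  have hP : ∀ r ∈ M.P, r ∉ Set.Ioo u v := by
    intro r hr hmem
    exact hnd ⟨ha, ⟨r, by rw [hR0]; exact hmem, hr⟩⟩
  by_cases hb : b ∈ M.A0
  · obtain ⟨p, hp, q, hq, hpq, _, hD⟩ := M.D_A0 b hb
    have hD0 : M.D0 b = Set.Ioo p q := by rw [M.D0_A0 b hb, hD, interior_Icc]
    have hsub : Set.Ioo p q ⊆ Set.Ioo u v := by rw [← hD0, ← hR0]; exact hab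
    have h1 : u ≤ p ∧ q ≤ v := by
      rw [← Set.Ioo_subset_Ioo_iff hpq]; exact hsub
    have hpu : p = u := by
      rcases eq_or_lt_of_le h1.1 with h | h
      · exact h.symm
      · exact absurd (Set.mem_Ioo.2 ⟨h, lt_of_lt_of_le hpq h1.2⟩) (hP p hp)
    have hqv : q = v := by
      rcases eq_or_lt_of_le h1.2 with h | h
      · exact h
      · exact absurd (Set.mem_Ioo.2 ⟨lt_of_le_of_lt h1.1 hpq, h⟩) (hP q hq)
    exact ⟨hb, by rw [hD, hR, hpu, hqv]⟩
  · obtain ⟨p, hp, hD⟩ := M.D_A12 b (M.mem_A12 hb)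
    have : p ∈ Set.Ioo u v := by
      rw [← hR0]
      exact hab (by rw [M.D0_A12 b (M.mem_A12 hb), hD]; exact rfl)
    exact absurd this (hP p hp)

/-! ### Rank machinery -/

/-- Symbols from which `Dset` can be reached in at most `k` forced steps. -/
def Rk : ℕ → Set M.A
  | 0 => M.Dset
  | k + 1 => Rk k ∪ {a | a ∈ M.A0 ∧ ∃ b ∈ Rk k, M.Vp a b}

lemma Rk_zero : M.Rk 0 = M.Dset := rfl

lemma Rk_succ (k : ℕ) :
    M.Rk (k + 1) = M.Rk k ∪ {a | a ∈ M.A0 ∧ ∃ b ∈ M.Rk k, M.Vp a b} := rfl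

/-- Symbols from which `Dset` is reachable. -/
def U : Set M.A := {a | ∃ k, a ∈ M.Rk k}

lemma Dset_sub_A0 : M.Dset ⊆ M.A0 := fun _ h => h.1

lemma Rk_sub_A0 (k : ℕ) : M.Rk k ⊆ M.A0 := by
  induction k with
  | zero => rw [Rk_zero]; exact M.Dset_sub_A0
  | succ k ih =>
    rw [Rk_succ]
    rintro a (h | h)
    exacts [ih h, h.1]

/-- The rank of a symbol: the least `k` with `a ∈ Rk k`. -/
noncomputable def rk (a : M.A) : ℕ := sInf {k | a ∈ M.Rk k}

/-- A global bound for ranks. -/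
noncomputable def Kc : ℕ := Finset.univ.sup M.rk

lemma rk_le_Kc (a : M.A) : M.rk a ≤ M.Kc :=
  Finset.le_sup (Finset.mem_univ a)

lemma mem_Rk_rk {a : M.A} (h : a ∈ M.U) : a ∈ M.Rk (M.rk a) :=
  Nat.sInf_mem h

lemma rk_le_of_mem {a : M.A} {k : ℕ} (h : a ∈ M.Rk k) : M.rk a ≤ k :=
  Nat.sInf_le h

lemma rk_zero_mem {a : M.A} (hU : a ∈ M.U) (h : M.rk a = 0) : a ∈ M.Dset := by
  have h2 := M.mem_Rk_rk hU
  rw [h, Rk_zero] at h2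
  exact h2

lemma step_decrease {a : M.A} (ha : a ∈ M.A0) (hU : a ∈ M.U) (hnd : a ∉ M.Dset) :
    ∃ b, b ∈ M.A0 ∧ M.D b = M.R a ∧ M.rk b < M.rk a := by
  have hk := M.mem_Rk_rk hU
  rcases Nat.eq_zero_or_pos (M.rk a) with h0 | h0
  · exact absurd (M.rk_zero_mem hU h0) hnd
  obtain ⟨k, hkk⟩ : ∃ k, M.rk a = k + 1 := ⟨M.rk a - 1, by omega⟩
  rw [hkk, Rk_succ] at hk
  rcases hk with hk | hk
  · exact absurd (M.rk_le_of_mem hk) (by omega)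
  · obtain ⟨_, b, hbRk, hvp⟩ := hk
    obtain ⟨hbA0, hDb⟩ := M.succ_struct ha hnd hvp
    exact ⟨b, hbA0, hDb, lt_of_le_of_lt (M.rk_le_of_mem hbRk) (by omega)⟩

/-! ### The coding step function and its orbits -/

/-- A state: a point together with an `A₀`-symbol whose domain contains it. -/
def St : Type := {s : ℝ × M.A // s.2 ∈ M.A0 ∧ s.1 ∈ M.D s.2}

lemma step_ex (s : M.St) : ∃ t : M.St,
    t.1.1 = M.f s.1.2 s.1.1 ∧ M.Vp s.1.2 t.1.2 ∧
      (s.1.2 ∈ M.U → s.1.2 ∉ M.Dset → M.rk t.1.2 < M.rk s.1.2) := by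
  obtain ⟨⟨x, a⟩, ha, hx⟩ := s
  simp only at ha hx ⊢
  have hx' : M.f a x ∈ M.R a := (M.f_homeo a ha).2.mapsTo hx
  by_cases hcase : a ∈ M.U ∧ a ∉ M.Dset
  · obtain ⟨b, hbA0, hDb, hrk⟩ := M.step_decrease ha hcase.1 hcase.2
    refine ⟨⟨(M.f a x, b), hbA0, by rw [hDb]; exact hx'⟩, rfl, ?_, fun _ _ => hrk⟩
    have : M.D0 b = M.R0 a := by
      rw [M.D0_A0 b hbA0, hDb, M.R0_A01 a (Or.inl ha)]
    exact le_of_eq this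
  · obtain ⟨u, hu, v, hv, huv, hR, hR0⟩ := M.R0_A0_eq ha
    obtain ⟨b, hbA0, hxb, hsub⟩ := M.cand_exists hu hv huv (hR ▸ hx')
    refine ⟨⟨(M.f a x, b), hbA0, hxb⟩, rfl, ?_, fun h1 h2 => absurd ⟨h1, h2⟩ hcase⟩
    rw [Vp, hR0]
    exact hsub

/-- The coding step function. -/
noncomputable def stepF (s : M.St) : M.St := Classical.choose (M.step_ex s)

lemma stepF_spec (s : M.St) :
    (M.stepF s).1.1 = M.f s.1.2 s.1.1 ∧ M.Vp s.1.2 (M.stepF s).1.2 ∧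
      (s.1.2 ∈ M.U → s.1.2 ∉ M.Dset → M.rk (M.stepF s).1.2 < M.rk s.1.2) :=
  Classical.choose_spec (M.step_ex s)

/-- The orbit of a state under the coding step function. -/
noncomputable def orb (s : M.St) (i : ℕ) : M.St := M.stepF^[i] s

/-- The symbol sequence along an orbit. -/
noncomputable def oSym (s : M.St) (i : ℕ) : M.A := (M.orb s i).1.2

/-- The point sequence along an orbit. -/
noncomputable def oPt (s : M.St) (i : ℕ) : ℝ := (M.orb s i).1.1

lemma orb_succ (s : M.St) (i : ℕ) : M.orb s (i + 1) = M.stepF (M.orb s i) :=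
  Function.iterate_succ_apply' _ _ _

lemma oSym_A0 (s : M.St) (i : ℕ) : M.oSym s i ∈ M.A0 := (M.orb s i).2.1

lemma oPt_mem (s : M.St) (i : ℕ) : M.oPt s i ∈ M.D (M.oSym s i) := (M.orb s i).2.2

lemma orb_pt_succ (s : M.St) (i : ℕ) :
    M.oPt s (i + 1) = M.f (M.oSym s i) (M.oPt s i) := by
  show (M.orb s (i + 1)).1.1 = _
  rw [orb_succ]
  exact (M.stepF_spec (M.orb s i)).1

lemma orb_vp (s : M.St) (i : ℕ) : M.Vp (M.oSym s i) (M.oSym s (i + 1)) := by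
  show M.Vp (M.orb s i).1.2 (M.orb s (i + 1)).1.2
  rw [orb_succ]
  exact (M.stepF_spec (M.orb s i)).2.1

lemma orb_rk (s : M.St) (i : ℕ) (h : M.oSym s i ∉ M.Dset) (hU : M.A0 ⊆ M.U) :
    M.rk (M.oSym s (i + 1)) < M.rk (M.oSym s i) := by
  show M.rk (M.orb s (i + 1)).1.2 < M.rk (M.orb s i).1.2
  rw [orb_succ]
  exact (M.stepF_spec (M.orb s i)).2.2 (hU (M.oSym_A0 s i)) h

lemma orb_gr (s : M.St) (i : ℕ) :
    (M.oPt s i, M.oPt s (i + 1)) ∈ M.Gr (M.oSym s i) := by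
  rw [M.Gr_A0 _ (M.oSym_A0 s i)]
  exact ⟨M.oPt_mem s i, M.orb_pt_succ s i⟩

lemma orb_gap (hU : M.A0 ⊆ M.U) (s : M.St) (i : ℕ) :
    ∃ j, i ≤ j ∧ j ≤ i + M.Kc ∧ M.oSym s j ∈ M.Dset := by
  have aux : ∀ m i, M.rk (M.oSym s i) ≤ m →
      ∃ j, i ≤ j ∧ j ≤ i + m ∧ M.oSym s j ∈ M.Dset := by
    intro m
    induction m with
    | zero =>
      intro i hi
      exact ⟨i, le_rfl, by omega, M.rk_zero_mem (hU (M.oSym_A0 s i)) (by omega)⟩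
    | succ m ih =>
      intro i hi
      by_cases hD : M.oSym s i ∈ M.Dset
      · exact ⟨i, le_rfl, by omega, hD⟩
      · have hlt := M.orb_rk s i hD hU
        obtain ⟨j, h1, h2, h3⟩ := ih (i + 1) (by omega)
        exact ⟨j, by omega, by omega, h3⟩
  exact aux M.Kc i (M.rk_le_Kc _)

/-! ### Reachability of `Dset` from every `A₀`-symbol -/

lemma A0_sub_U (C0 : Set M.A) (hC0 : M.IrreducibleSet C0) (hsub : M.A0 ⊆ C0)
    (hDne : ∃ a ∈ M.A0, (M.R0 a ∩ (M.P : Set ℝ)).Nonempty) : M.A0 ⊆ M.U := by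
  obtain ⟨d, hd0, hdP⟩ := hDne
  have hdD : d ∈ M.Dset := ⟨hd0, hdP⟩
  intro a ha
  by_contra haU
  obtain ⟨n, u, ⟨hLang, hC0mem⟩, hu0, hulast⟩ := hC0 a (hsub ha) d (hsub hd0)
  obtain ⟨z, hz, m, hzm⟩ := hLang
  have hvp : ∀ i : Fin n, M.Vp (u i.castSucc) (u i.succ) := by
    intro i
    have e1 := hzm i.castSucc
    have e2 := hzm i.succ
    rw [Vp, e1, e2, Fin.coe_castSucc, Fin.val_succ, ← Nat.add_assoc]
    exact hz (m + (i : ℕ))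
  have key : ∀ i : Fin (n + 1), u i ∈ M.A0 ∧ u i ∉ M.U := by
    intro i
    induction i using Fin.induction with
    | zero => exact hu0 ▸ ⟨ha, haU⟩
    | succ i ih =>
      have hind : u i.castSucc ∉ M.Dset := fun hD => ih.2 ⟨0, hD⟩
      obtain ⟨hA0', _⟩ := M.succ_struct ih.1 hind (hvp i)
      refine ⟨hA0', fun hU' => ih.2 ?_⟩
      obtain ⟨k, hk⟩ := hU'
      exact ⟨k + 1, Or.inr ⟨ih.1, _, hk, hvp i⟩⟩
  exact (key (Fin.last n)).2 (hulast ▸ ⟨0, hdD⟩)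

/-! ### Interval lemmas -/

lemma oSym_zero (s : M.St) : M.oSym s 0 = s.1.2 := rfl

/-- From any occurrence in a valid `C0`-sequence there is a continuation with
`Good` symbols within every window of length `Kc + 1`. -/
lemma tail_exists (hU : M.A0 ⊆ M.U) (C0 : Set M.A) (hA0C0 : M.A0 ⊆ C0)
    (zb : ℕ → M.A) (hchain : ∀ i, M.Vp (zb i) (zb (i + 1))) (hC0 : ∀ i, zb i ∈ C0)
    (kb : ℕ) :
    ∃ t : ℕ → M.A, t 0 = zb kb ∧ (∀ i, M.Vp (t i) (t (i + 1))) ∧ (∀ i, t i ∈ C0) ∧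
      ∀ i, ∃ j, i ≤ j ∧ j ≤ i + M.Kc ∧ t j ∈ M.GoodS := by
  classical
  by_cases hA0 : ∃ s, zb (kb + s) ∈ M.A0
  · set t0 := Nat.find hA0 with ht0
    have hs0A0 : zb (kb + t0) ∈ M.A0 := Nat.find_spec hA0
    obtain ⟨p, _, q, _, hpq, _, hDs⟩ := M.D_A0 _ hs0A0
    have hpmem : p ∈ M.D (zb (kb + t0)) := by rw [hDs]; exact ⟨le_rfl, hpq.le⟩
    refine ⟨fun i => if i < t0 then zb (kb + i)
        else M.oSym ⟨(p, zb (kb + t0)), hs0A0, hpmem⟩ (i - t0), ?_, ?_, ?_, ?_⟩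
    · show (if 0 < t0 then zb (kb + 0)
        else M.oSym ⟨(p, zb (kb + t0)), hs0A0, hpmem⟩ (0 - t0)) = zb kb
      by_cases h0 : 0 < t0
      · rw [if_pos h0, Nat.add_zero]
      · rw [if_neg h0]
        have ht00 : t0 = 0 := by omega
        have e0 : (0 : ℕ) - t0 = 0 := by omega
        rw [e0]
        show zb (kb + t0) = zb kb
        rw [ht00, Nat.add_zero]
    · intro i
      by_cases h1 : i + 1 < t0
      · simp only [if_pos (by omega : i < t0), if_pos h1]
        exact hchain (kb + i)
      · by_cases h2 : i < t0
        · have h3 : i + 1 = t0 := by omega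
          simp only [if_pos h2, if_neg (by omega : ¬ i + 1 < t0)]
          have : i + 1 - t0 = 0 := by omega
          rw [this]
          show M.Vp (zb (kb + i)) (zb (kb + t0))
          rw [← h3]
          exact hchain (kb + i)
        · simp only [if_neg h2, if_neg (by omega : ¬ i + 1 < t0)]
          have e : i + 1 - t0 = (i - t0) + 1 := by omega
          rw [e]
          exact M.orb_vp _ (i - t0)
    · intro i
      by_cases h1 : i < t0
      · simp only [if_pos h1]; exact hC0 _
      · simp only [if_neg h1]; exact hA0C0 (M.oSym_A0 _ _)
    · intro i
      by_cases h1 : i < t0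
      · refine ⟨i, le_rfl, by omega, ?_⟩
        simp only [if_pos h1]
        exact Or.inl (Nat.find_min hA0 h1)
      · obtain ⟨j', hj1, hj2, hj3⟩ := M.orb_gap hU ⟨(p, zb (kb + t0)), hs0A0, hpmem⟩ (i - t0)
        refine ⟨t0 + j', by omega, by omega, ?_⟩
        simp only [if_neg (by omega : ¬ t0 + j' < t0)]
        have e : t0 + j' - t0 = j' := by omega
        rw [e]
        exact Or.inr hj3
  · refine ⟨fun i => zb (kb + i), by show zb (kb + 0) = zb kb; rw [Nat.add_zero],
      fun i => hchain (kb + i),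
      fun i => hC0 _, fun i => ⟨i, le_rfl, by omega, Or.inl (fun h => hA0 ⟨i, h⟩)⟩⟩

/-- Any valid word can be replaced by a duplicate-free valid word with the same
endpoints. -/
lemma exists_nodup_word (C0 : Set M.A) :
    ∀ N (l : List M.A), l.length ≤ N → l ≠ [] → List.Chain' M.Vp l →
      (∀ x ∈ l, x ∈ C0) →
      ∃ l' : List M.A, l' ≠ [] ∧ List.Chain' M.Vp l' ∧ (∀ x ∈ l', x ∈ C0) ∧
        l'.Nodup ∧ l'.head? = l.head? ∧ l'.getLast? = l.getLast? := by
  intro N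
  induction N with
  | zero =>
    intro l hl hne _ _
    exact absurd (List.length_eq_zero_iff.1 (by omega)) hne
  | succ N ih =>
    intro l hl hne hch hC
    by_cases hnd : l.Nodup
    · exact ⟨l, hne, hch, hC, hnd, rfl, rfl⟩
    · have hninj : ¬ Function.Injective l.get :=
        fun h => hnd (List.nodup_iff_injective_get.2 h)
      obtain ⟨i, j, heq, hij⟩ : ∃ i j : Fin l.length, l.get i = l.get j ∧ (i : ℕ) < j := by
        unfold Function.Injective at hninj
        push_neg at hninj
        obtain ⟨i, j, heq, hne'⟩ := hninj
        rcases lt_or_gt_of_ne (fun h : (i : ℕ) = (j : ℕ) => hne' (Fin.ext h)) with h | h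
        · exact ⟨i, j, heq, h⟩
        · exact ⟨j, i, heq.symm, h⟩
      have hjlt : (j : ℕ) < l.length := j.isLt
      have hilt : (i : ℕ) < l.length := i.isLt
      have hlen_take : (l.take ((i : ℕ) + 1)).length = (i : ℕ) + 1 := by
        rw [List.length_take]; omega
      have htake_ne : l.take ((i : ℕ) + 1) ≠ [] := by
        intro h
        have := congrArg List.length h
        rw [hlen_take] at this
        simp at this
      have hlast_take : (l.take ((i : ℕ) + 1)).getLast? = some l[(i : ℕ)] := by
        rw [List.getLast?_eq_getElem?, hlen_take]
        simp only [Nat.add_sub_cancel]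
        rw [List.getElem?_take_of_lt (by omega), List.getElem?_eq_getElem hilt]
      have hhead_drop : (l.drop ((j : ℕ) + 1)).head? = l[(j : ℕ) + 1]? :=
        List.head?_drop
      have hchain' : List.Chain' M.Vp (l.take ((i : ℕ) + 1) ++ l.drop ((j : ℕ) + 1)) := by
        show List.IsChain M.Vp _
        rw [List.isChain_append]
        refine ⟨hch.prefix (List.take_prefix _ _), hch.suffix (List.drop_suffix _ _), ?_⟩
        intro x hx y hy
        rw [hlast_take, Option.mem_def, Option.some_inj] at hx
        rw [hhead_drop] at hy
        have hjn : (j : ℕ) + 1 < l.length := by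
          by_contra hc
          rw [List.getElem?_eq_none (by omega)] at hy
          exact Option.not_mem_none y hy
        rw [List.getElem?_eq_getElem hjn, Option.mem_def, Option.some_inj] at hy
        subst hx; subst hy
        have hc := List.isChain_iff_getElem.1 hch (j : ℕ) (by omega)
        simp only [List.get_eq_getElem] at hc heq
        rw [heq]
        exact hc
      have hC' : ∀ x ∈ l.take ((i : ℕ) + 1) ++ l.drop ((j : ℕ) + 1), x ∈ C0 := by
        intro x hx
        rcases List.mem_append.1 hx with hx | hx
        · exact hC x ((List.take_sublist _ _).subset hx)
        · exact hC x ((List.drop_sublist _ _).subset hx)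
      have hne' : l.take ((i : ℕ) + 1) ++ l.drop ((j : ℕ) + 1) ≠ [] := by
        intro h
        exact htake_ne (List.append_eq_nil_iff.1 h).1
      have hlen' : (l.take ((i : ℕ) + 1) ++ l.drop ((j : ℕ) + 1)).length ≤ N := by
        rw [List.length_append, hlen_take, List.length_drop]
        omega
      obtain ⟨l'', h1, h2, h3, h4, h5, h6⟩ := ih _ hlen' hne' hchain' hC'
      refine ⟨l'', h1, h2, h3, h4, ?_, ?_⟩
      · rw [h5]
        cases l with
        | nil => exact absurd rfl hne
        | cons c cs => rfl
      · rw [h6]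
        by_cases hjn : (j : ℕ) + 1 < l.length
        · have hdne : l.drop ((j : ℕ) + 1) ≠ [] := by
            intro h
            have := congrArg List.length h
            rw [List.length_drop] at this
            simp at this
            omega
          rw [List.getLast?_append_of_ne_nil _ hdne]
          rw [List.getLast?_eq_getElem?, List.getLast?_eq_getElem?, List.length_drop,
            List.getElem?_drop]
          congr 1
          omega
        · have hdnil : l.drop ((j : ℕ) + 1) = [] := by
            apply List.drop_eq_nil_of_le
            omega
          have hlast : l.getLast? = some l[(j : ℕ)] := by
            rw [List.getLast?_eq_getElem?]
            have e : l.length - 1 = (j : ℕ) := by omega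
            rw [e, List.getElem?_eq_getElem hjlt]
          rw [hdnil, List.append_nil, hlast_take, hlast]
          simp only [List.get_eq_getElem] at heq
          rw [heq]

end MarkovMultiMap

lemma intervalLen_nonneg {S : Set ℝ} (hne : S.Nonempty) (hbd : S ⊆ Set.Icc 0 1) :
    0 ≤ intervalLen S := by
  have h1 : BddBelow S := ⟨0, fun x hx => (hbd hx).1⟩
  have h2 : BddAbove S := ⟨1, fun x hx => (hbd hx).2⟩
  exact sub_nonneg.2 (csInf_le_csSup hne h1 h2)

lemma intervalLen_le_one {S : Set ℝ} (hne : S.Nonempty) (hbd : S ⊆ Set.Icc 0 1) :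
    intervalLen S ≤ 1 := by
  have h1 : sSup S ≤ 1 := csSup_le hne (fun x hx => (hbd hx).2)
  have h2 : (0 : ℝ) ≤ sInf S := le_csInf hne (fun x hx => (hbd hx).1)
  unfold intervalLen
  linarith

lemma intervalLen_mono {S T : Set ℝ} (hST : S ⊆ T) (hne : S.Nonempty)
    (hT : T ⊆ Set.Icc 0 1) : intervalLen S ≤ intervalLen T := by
  have hbb : BddBelow T := ⟨0, fun x hx => (hT hx).1⟩
  have hba : BddAbove T := ⟨1, fun x hx => (hT hx).2⟩
  have h1 : sSup S ≤ sSup T := csSup_le_csSup hba hne hST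
  have h2 : sInf T ≤ sInf S := csInf_le_csInf hbb hne hST
  unfold intervalLen
  linarith

lemma intervalLen_subsingleton {S : Set ℝ} (h : S.Subsingleton) : intervalLen S = 0 := by
  rcases h.eq_empty_or_singleton with rfl | ⟨x, rfl⟩
  · simp [intervalLen, Real.sSup_empty, Real.sInf_empty]
  · simp [intervalLen]

/-! ### The sets `I_u` via lists -/

lemma gWordList_append (M : MarkovMultiMap) (l : List M.A) (a : M.A) (x : ℝ) :
    gWordList M (l ++ [a]) x = gWordList M l (M.g a x) := by
  induction l with
  | nil => rfl
  | cons c l ih =>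
    show M.g c (gWordList M (l ++ [a]) x) = M.g c (gWordList M l (M.g a x))
    rw [ih]

namespace MarkovMultiMap

variable (M : MarkovMultiMap)

/-- `I` of a word presented as (proper prefix, last symbol). -/
def Iw2 (l : List M.A) (b : M.A) : Set ℝ := gWordList M (l ++ [b]) '' M.R b

lemma Iw2_nil (b : M.A) : M.Iw2 [] b = M.g b '' M.R b := rfl

lemma Iw2_cons (c : M.A) (l : List M.A) (b : M.A) :
    M.Iw2 (c :: l) b = M.g c '' M.Iw2 l b := by
  unfold Iw2
  rw [List.cons_append, Set.image_image]
  rfl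

lemma Iw2_nonempty (l : List M.A) (b : M.A) : (M.Iw2 l b).Nonempty :=
  (M.R_nonempty b).image _

lemma Iw2_nil_sub (b : M.A) : M.Iw2 [] b ⊆ M.D b := by
  rintro y ⟨x, hx, rfl⟩
  exact M.g_maps b x hx

/-- `I_u ⊆ D(u₀)`. -/
lemma Iw2_sub_D : ∀ (l : List M.A) (b : M.A), List.Chain' M.Vp (l ++ [b]) →
    M.Iw2 l b ⊆ M.D (l.headD b) := by
  intro l
  induction l with
  | nil =>
    intro b _
    exact M.Iw2_nil_sub b
  | cons c l ih =>
    intro b hch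
    rw [List.cons_append] at hch
    rw [Iw2_cons]
    have hsub : M.Iw2 l b ⊆ M.R c := by
      cases l with
      | nil => exact (M.Iw2_nil_sub b).trans (M.Vp_D_sub_R (List.isChain_cons_cons.1 hch).1)
      | cons c' l' =>
        rw [List.cons_append] at hch
        exact (ih b (List.isChain_cons_cons.1 hch).2).trans
          (M.Vp_D_sub_R (List.isChain_cons_cons.1 hch).1)
    rintro y ⟨x, hx, rfl⟩
    exact M.g_maps c x (hsub hx)

/-- `I` of a word is contained in the range of any predecessor symbol. -/
lemma Iw2_sub_R (c : M.A) (l : List M.A) (b : M.A)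
    (hch : List.Chain' M.Vp (c :: (l ++ [b]))) : M.Iw2 l b ⊆ M.R c := by
  cases l with
  | nil => exact (M.Iw2_nil_sub b).trans (M.Vp_D_sub_R (List.isChain_cons_cons.1 hch).1)
  | cons c' l' =>
    rw [List.cons_append] at hch
    exact (M.Iw2_sub_D (c' :: l') b (List.isChain_cons_cons.1 hch).2).trans
      (M.Vp_D_sub_R (List.isChain_cons_cons.1 hch).1)

lemma Iw2_sub_unit (l : List M.A) (b : M.A) (hch : List.Chain' M.Vp (l ++ [b])) :
    M.Iw2 l b ⊆ Set.Icc 0 1 :=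
  (M.Iw2_sub_D l b hch).trans (M.D_sub_unit _)

/-- Nesting: appending a letter shrinks `I`. -/
lemma Iw2_anti (l : List M.A) (c b : M.A) (h : M.D b ⊆ M.R c) :
    M.Iw2 (l ++ [c]) b ⊆ M.Iw2 l c := by
  rintro y ⟨x, hx, rfl⟩
  rw [gWordList_append]
  exact Set.mem_image_of_mem _ (h (M.g_maps b x hx))

/-- If the word contains a symbol outside `A₀`, `I_u` is a single point. -/
lemma Iw2_subsing : ∀ (l : List M.A) (b : M.A), List.Chain' M.Vp (l ++ [b]) →
    ((∃ x ∈ l, x ∉ M.A0) ∨ b ∉ M.A0) → (M.Iw2 l b).Subsingleton := by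
  intro l
  induction l with
  | nil =>
    intro b _ hbad
    rcases hbad with ⟨x, hx, _⟩ | hb
    · exact absurd hx List.not_mem_nil
    · obtain ⟨p, _, hD⟩ := M.D_A12 b (M.mem_A12 hb)
      refine (Set.subsingleton_singleton (a := p)).anti ?_
      intro y hy
      rw [← hD]
      exact M.Iw2_nil_sub b hy
  | cons c l ih =>
    intro b hch hbad
    have hsub : M.Iw2 l b ⊆ M.R c := M.Iw2_sub_R c l b (by rwa [List.cons_append] at hch)
    rw [Iw2_cons]
    by_cases hc : c ∈ M.A0
    · have hbad' : (∃ x ∈ l, x ∉ M.A0) ∨ b ∉ M.A0 := by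
        rcases hbad with ⟨x, hx, hxA⟩ | hb
        · rcases List.mem_cons.1 hx with rfl | hx'
          · exact absurd hc hxA
          · exact Or.inl ⟨x, hx', hxA⟩
        · exact Or.inr hb
      have htail : List.Chain' M.Vp (l ++ [b]) := by
        rw [List.cons_append] at hch
        exact hch.tail
      exact (ih b htail hbad').image _
    · obtain ⟨p, _, hD⟩ := M.D_A12 c (M.mem_A12 hc)
      refine (Set.subsingleton_singleton (a := p)).anti ?_
      rintro y ⟨x, hx, rfl⟩
      rw [← hD]
      exact M.g_maps c x (hsub hx)

/-- Bridge between `Iword` and `Iw2`. -/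
lemma Iword_eq {n : ℕ} (u : Fin (n + 1) → M.A) :
    M.Iword u = M.Iw2 (List.ofFn (fun i : Fin n => u i.castSucc)) (u (Fin.last n)) := by
  unfold Iword Iw2 gWord
  rw [List.ofFn_succ' u, List.concat_eq_append]

/-- Words occurring in points of the SFT give valid chains. -/
lemma chain_ofFn {n : ℕ} (w : Fin (n + 1) → M.A) (z : ℕ → M.A) (hz : z ∈ M.SFT)
    (m : ℕ) (hw : ∀ i : Fin (n + 1), w i = z (m + (i : ℕ))) :
    List.Chain' M.Vp (List.ofFn w) := by
  show List.IsChain M.Vp _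
  rw [List.isChain_iff_getElem]
  intro i hi
  rw [List.length_ofFn] at hi
  rw [List.getElem_ofFn, List.getElem_ofFn]
  have e1 := hw ⟨i, by omega⟩
  have e2 := hw ⟨i + 1, by omega⟩
  rw [Vp, e1, e2]
  show M.D0 (z (m + (i + 1))) ⊆ M.R0 (z (m + i))
  rw [← Nat.add_assoc]
  exact hz (m + i)

end MarkovMultiMap
/-- Sufficient condition for the Coding Condition: if `D = {a ∈ A₀ : R₀(a) ∩ P ≠ ∅}`
is nonempty, the contraction ratios along `D` are uniformly bounded below `1`, and some
irreducible component contains `A₀`, then `Σ_M` satisfies (CC). -/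
theorem stmt16 (M : MarkovMultiMap) (hpp : M.ProperlyParametrized)
    (hDne : ∃ a ∈ M.A0, (M.R0 a ∩ (M.P : Set ℝ)).Nonempty)
    (hcontract : ∃ γ : ℝ, γ < 1 ∧ ∀ n : ℕ, ∀ u : Fin (n + 2) → M.A, u ∈ M.Lang (n + 2) →
      u ⟨n, by omega⟩ ∈ M.A0 → (M.R0 (u ⟨n, by omega⟩) ∩ (M.P : Set ℝ)).Nonempty →
      intervalLen (M.Iword (fun i : Fin (n + 1) => u i.castSucc)) ≠ 0 →
      intervalLen (M.Iword u) ≤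
        γ * intervalLen (M.Iword (fun i : Fin (n + 1) => u i.castSucc)))
    (hirr : ∃ C0 : Set M.A, M.IrreducibleComponent C0 ∧ M.A0 ⊆ C0) :
    M.CC := by
  classical
  obtain ⟨γ, hγ1, hγ⟩ := hcontract
  obtain ⟨C0, hC0comp, hA0C0⟩ := hirr
  have hC0irr := hC0comp.1
  have hU : M.A0 ⊆ M.U := M.A0_sub_U C0 hC0irr hA0C0 hDne
  set KZ := Fintype.card M.A + M.Kc with hKZ
  set Z : Set (ℕ → M.A) := {z | (∀ i, M.D0 (z (i + 1)) ⊆ M.R0 (z i)) ∧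
    (∀ i, z i ∈ C0) ∧ ∀ i, ∃ j, i ≤ j ∧ j ≤ i + KZ ∧ z j ∈ M.GoodS} with hZdef
  have hKcKZ : M.Kc ≤ KZ := by omega
  refine ⟨Z, ⟨fun z hz => hz.1, fun z hz => ?_, fun x hx => ?_⟩, ?_, ?_, ?_⟩
  · -- shift invariance
    refine ⟨fun i => hz.1 (i + 1), fun i => hz.2.1 (i + 1), fun i => ?_⟩
    obtain ⟨j, h1, h2, h3⟩ := hz.2.2 (i + 1)
    refine ⟨j - 1, by omega, by omega, ?_⟩
    show z (j - 1 + 1) ∈ M.GoodS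
    rwa [show j - 1 + 1 = j by omega]
  · -- closedness
    refine ⟨fun i => ?_, fun i => ?_, fun i => ?_⟩
    · obtain ⟨z, hz, hagree⟩ := hx (i + 2)
      rw [← hagree (i + 1) (by omega), ← hagree i (by omega)]
      exact hz.1 i
    · obtain ⟨z, hz, hagree⟩ := hx (i + 1)
      rw [← hagree i (by omega)]
      exact hz.2.1 i
    · obtain ⟨z, hz, hagree⟩ := hx (i + KZ + 1)
      obtain ⟨j, h1, h2, h3⟩ := hz.2.2 i
      refine ⟨j, h1, h2, ?_⟩
      rw [← hagree j (by omega)]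
      exact h3
  · -- transitivity on symbols
    intro a b ha hb
    obtain ⟨za, hzaZ, ka, hzaka⟩ := ha
    obtain ⟨zb, hzbZ, kb, hzbkb⟩ := hb
    have haC0 : a ∈ C0 := hzaka ▸ hzaZ.2.1 ka
    have hbC0 : b ∈ C0 := hzbkb ▸ hzbZ.2.1 kb
    obtain ⟨n, u, ⟨huLang, huC0⟩, hu0, hulast⟩ := hC0irr a haC0 b hbC0
    obtain ⟨zw, hzw, mw, hzwm⟩ := huLang
    have hch : List.Chain' M.Vp (List.ofFn u) := M.chain_ofFn u zw hzw mw hzwm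
    have hCl : ∀ x ∈ List.ofFn u, x ∈ C0 := by
      intro x hx
      obtain ⟨i, rfl⟩ := List.mem_ofFn.1 hx
      exact huC0 i
    have hofnne : List.ofFn u ≠ [] := by
      intro h
      have := congrArg List.length h
      simp at this
    obtain ⟨l, hlne, hlch, hlC0, hlnd, hlhead, hllast⟩ :=
      M.exists_nodup_word C0 (List.ofFn u).length (List.ofFn u) le_rfl hofnne hch hCl
    have hlpos : 0 < l.length := List.length_pos_iff.2 hlne
    have hlcard : l.length ≤ Fintype.card M.A := hlnd.length_le_card
    -- head and last of l
    have hofnhead : (List.ofFn u).head? = some a := by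
      rw [List.ofFn_succ]
      rw [hu0]
      rfl
    have hofnlast : (List.ofFn u).getLast? = some b := by
      rw [List.getLast?_eq_getElem?, List.length_ofFn]
      simp only [Nat.add_sub_cancel]
      rw [List.getElem?_eq_getElem (by rw [List.length_ofFn]; omega), List.getElem_ofFn]
      rw [← hulast]
      rfl
    have hlhead' : l.head? = some a := hlhead.trans hofnhead
    have hllast' : l.getLast? = some b := hllast.trans hofnlast
    have hgetlast : l[l.length - 1]'(by omega) = b := by
      have := (List.getLast?_eq_getElem? (l := l)).symm.trans hllast'
      rwa [List.getElem?_eq_getElem (by omega), Option.some_inj] at this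
    have hgethead : l[0]'(by omega) = a := by
      have h0 : l.head? = l[0]? := by
        cases l with
        | nil => exact absurd rfl hlne
        | cons c cs => simp
      have := h0.symm.trans hlhead'
      rwa [List.getElem?_eq_getElem (by omega), Option.some_inj] at this
    -- tail from b's occurrence
    obtain ⟨t, ht0, htch, htC0, htgap⟩ :=
      M.tail_exists hU C0 hA0C0 zb (fun i => hzbZ.1 i) (fun i => hzbZ.2.1 i) kb
    have htb : t 0 = b := ht0.trans hzbkb
    set q := l.length - 1 with hq
    set zc : ℕ → M.A := fun p => if p < q then l.getD p b else t (p - q) with hzc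
    have hzc_lt : ∀ p (hp : p < q), zc p = l[p]'(by omega) := by
      intro p hp
      show (if p < q then l.getD p b else t (p - q)) = _
      rw [if_pos hp]
      exact List.getD_eq_getElem l b (by omega)
    have hzc_ge : ∀ p, q ≤ p → zc p = t (p - q) := by
      intro p hp
      show (if p < q then l.getD p b else t (p - q)) = _
      rw [if_neg (by omega)]
    have hzc_le : ∀ p (h : p ≤ q), zc p = l[p]'(by omega) := by
      intro p h
      rcases lt_or_eq_of_le h with h' | h'
      · exact hzc_lt p h'
      · have hgetlast' : ∀ (p' : ℕ) (hp' : p' = l.length - 1), l[p']'(by omega) = b := by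
          intro p' hp'
          subst hp'
          exact hgetlast
        rw [hzc_ge p h'.ge, show p - q = 0 by omega, htb]
        exact (hgetlast' p (by omega)).symm
    have hzcZ : zc ∈ Z := by
      refine ⟨fun i => ?_, fun i => ?_, fun i => ?_⟩
      · -- chain
        by_cases hi : i + 1 ≤ q
        · rw [hzc_le i (by omega), hzc_le (i + 1) hi]
          have := List.isChain_iff_getElem.1 hlch i (by omega)
          exact this
        · by_cases hi2 : q ≤ i
          · rw [hzc_ge i hi2, hzc_ge (i + 1) (by omega), show i + 1 - q = (i - q) + 1 by omega]
            exact htch (i - q)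
          · omega
      · -- C0
        by_cases hi : i < q
        · rw [hzc_lt i hi]
          exact hlC0 _ (List.getElem_mem _)
        · rw [hzc_ge i (by omega)]
          exact htC0 _
      · -- gaps
        by_cases hi : q ≤ i
        · obtain ⟨j, h1, h2, h3⟩ := htgap (i - q)
          refine ⟨q + j, by omega, by omega, ?_⟩
          rw [hzc_ge (q + j) (by omega), show q + j - q = j by omega]
          exact h3
        · obtain ⟨j, h1, h2, h3⟩ := htgap 0
          refine ⟨q + j, by omega, by omega, ?_⟩
          rw [hzc_ge (q + j) (by omega), show q + j - q = j by omega]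
          exact h3
    refine ⟨zc, hzcZ, 0, q, ?_, ?_⟩
    · rw [hzc_le 0 (by omega)]
      exact hgethead
    · rw [show 0 + q = q by omega, hzc_le q le_rfl]
      exact hgetlast
  · -- coding of every point
    intro y hy
    obtain ⟨b0, hb0A0, hyb0, -⟩ := M.cand_exists M.P_zero M.P_one one_pos hy
    refine ⟨M.oSym ⟨(y, b0), hb0A0, hyb0⟩,
      ⟨fun i => M.orb_vp _ i, fun i => hA0C0 (M.oSym_A0 _ i), fun i => ?_⟩,
      M.oPt ⟨(y, b0), hb0A0, hyb0⟩,
      ⟨fun k => M.D_sub_unit _ (M.oPt_mem _ k), fun k => Set.mem_iUnion.2 ⟨_, M.orb_gr _ k⟩⟩,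
      rfl, fun i => M.orb_gr _ i⟩
    obtain ⟨j, h1, h2, h3⟩ := M.orb_gap hU ⟨(y, b0), hb0A0, hyb0⟩ i
    exact ⟨j, h1, by omega, Or.inr h3⟩
  · -- shrinking of the intervals I_u
    set γ' : ℝ := max γ 0 with hγ'
    have hγ'0 : (0 : ℝ) ≤ γ' := le_max_right _ _
    have hγ'1 : γ' < 1 := max_lt hγ1 one_pos
    have main : ∀ z : ℕ → M.A, z ∈ M.SFT → ∀ m j : ℕ,
        intervalLen (M.Iword (fun i : Fin (j + 1) => z (m + (i : ℕ)))) ≤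
          γ' ^ ((Finset.range j).filter (fun i => z (m + i) ∈ M.Dset)).card := by
      intro z hz m j
      induction j with
      | zero =>
        simp only [Finset.range_zero, Finset.filter_empty, Finset.card_empty, pow_zero]
        rw [M.Iword_eq, List.ofFn_zero]
        exact intervalLen_le_one (M.Iw2_nonempty _ _)
          (M.Iw2_sub_unit _ _ (List.isChain_singleton _))
      | succ j ih =>
        have hofn : List.ofFn (fun i : Fin (j + 1) => z (m + (i : ℕ))) =
            (List.ofFn (fun i : Fin j => z (m + (i : ℕ)))) ++ [z (m + j)] := by
          rw [List.ofFn_succ' (fun i : Fin (j + 1) => z (m + (i : ℕ))),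
            List.concat_eq_append]
          rfl
        have hchpre : List.Chain' M.Vp (List.ofFn (fun i : Fin (j + 1) => z (m + (i : ℕ)))) :=
          M.chain_ofFn _ z hz m (fun i => rfl)
        have hIw2full : M.Iword (fun i : Fin (j + 2) => z (m + (i : ℕ))) =
            M.Iw2 (List.ofFn (fun i : Fin (j + 1) => z (m + (i : ℕ)))) (z (m + (j + 1))) := by
          rw [M.Iword_eq]
          rfl
        have hIw2pre : M.Iword (fun i : Fin (j + 1) => z (m + (i : ℕ))) =
            M.Iw2 (List.ofFn (fun i : Fin j => z (m + (i : ℕ)))) (z (m + j)) := by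
          rw [M.Iword_eq]
          rfl
        have hvpj : M.Vp (z (m + j)) (z (m + (j + 1))) := by
          show M.D0 (z (m + (j + 1))) ⊆ M.R0 (z (m + j))
          rw [show m + (j + 1) = (m + j) + 1 by omega]
          exact hz (m + j)
        have hsub : M.Iw2 (List.ofFn (fun i : Fin (j + 1) => z (m + (i : ℕ)))) (z (m + (j + 1))) ⊆
            M.Iw2 (List.ofFn (fun i : Fin j => z (m + (i : ℕ)))) (z (m + j)) := by
          rw [hofn]
          exact M.Iw2_anti _ _ _ (M.Vp_D_sub_R hvpj)
        have hprechain : List.Chain' M.Vp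
            ((List.ofFn (fun i : Fin j => z (m + (i : ℕ)))) ++ [z (m + j)]) := by
          rw [← hofn]; exact hchpre
        have hpreunit := M.Iw2_sub_unit _ _ hprechain
        have hmono : intervalLen (M.Iword (fun i : Fin (j + 2) => z (m + (i : ℕ)))) ≤
            intervalLen (M.Iword (fun i : Fin (j + 1) => z (m + (i : ℕ)))) := by
          rw [hIw2full, hIw2pre]
          exact intervalLen_mono hsub (M.Iw2_nonempty _ _) hpreunit
        have hprenonneg : 0 ≤ intervalLen (M.Iword (fun i : Fin (j + 1) => z (m + (i : ℕ)))) := by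
          rw [hIw2pre]
          exact intervalLen_nonneg (M.Iw2_nonempty _ _) hpreunit
        by_cases hD : z (m + j) ∈ M.Dset
        · rw [Finset.range_add_one, Finset.filter_insert, if_pos hD,
            Finset.card_insert_of_notMem (by simp), pow_succ]
          rcases eq_or_lt_of_le hprenonneg with h0 | h0
          · refine le_trans (le_trans hmono h0.symm.le) ?_
            positivity
          · have happ := hγ j (fun i : Fin (j + 2) => z (m + (i : ℕ)))
              ⟨z, hz, m, fun i => rfl⟩ hD.1 hD.2 (Ne.symm (ne_of_lt h0))
            calc intervalLen (M.Iword (fun i : Fin (j + 2) => z (m + (i : ℕ))))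
                ≤ γ * intervalLen (M.Iword (fun i : Fin (j + 1) => z (m + (i : ℕ)))) := happ
              _ ≤ γ' * intervalLen (M.Iword (fun i : Fin (j + 1) => z (m + (i : ℕ)))) :=
                  mul_le_mul_of_nonneg_right (le_max_left _ _) hprenonneg
              _ ≤ γ' * γ' ^ ((Finset.range j).filter (fun i => z (m + i) ∈ M.Dset)).card :=
                  mul_le_mul_of_nonneg_left ih hγ'0
              _ = γ' ^ ((Finset.range j).filter (fun i => z (m + i) ∈ M.Dset)).card * γ' :=
                  mul_comm _ _
        · rw [Finset.range_add_one, Finset.filter_insert, if_neg hD]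
          exact le_trans hmono ih
    intro ε hε
    obtain ⟨Mb, hMb⟩ := exists_pow_lt_of_lt_one hε hγ'1
    refine ⟨Mb * (KZ + 1) + KZ + 1, fun n hn u hu => ?_⟩
    obtain ⟨z, hzZ, m, hzm⟩ := hu
    have hzSFT : z ∈ M.SFT := hzZ.1
    by_cases hall : ∀ i : Fin (n + 1), u i ∈ M.A0
    · -- all symbols in A0: use contraction
      have hueq : u = fun i : Fin (n + 1) => z (m + (i : ℕ)) := funext fun i => hzm i
      have hcnt : Mb ≤ ((Finset.range n).filter (fun i => z (m + i) ∈ M.Dset)).card := by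
        have hsel : ∀ t', t' < Mb → ∃ i, t' * (KZ + 1) ≤ i ∧ i ≤ t' * (KZ + 1) + KZ ∧
            i ∈ (Finset.range n).filter (fun i => z (m + i) ∈ M.Dset) := by
          intro t' ht'
          have hmul : (t' + 1) * (KZ + 1) ≤ Mb * (KZ + 1) :=
            Nat.mul_le_mul_right _ (Nat.succ_le_of_lt ht')
          have emul : (t' + 1) * (KZ + 1) = t' * (KZ + 1) + KZ + 1 := by ring
          rw [emul] at hmul
          have hwin : t' * (KZ + 1) + KZ < n := by omega
          obtain ⟨j, h1, h2, h3⟩ := hzZ.2.2 (m + t' * (KZ + 1))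
          refine ⟨j - m, by omega, by omega, Finset.mem_filter.2 ⟨Finset.mem_range.2 (by omega), ?_⟩⟩
          have hjm : m + (j - m) = j := by omega
          rw [hjm]
          have hjA0 : z j ∈ M.A0 := by
            have := hall ⟨j - m, by omega⟩
            rw [hzm ⟨j - m, by omega⟩] at this
            show z j ∈ M.A0
            rwa [show m + ((⟨j - m, by omega⟩ : Fin (n + 1)) : ℕ) = j by simp; omega] at this
          rcases h3 with h3 | h3
          · exact absurd hjA0 h3
          · exact h3
        choose! f hf1 hf2 hf3 using hsel
        have key : ∀ t1 t2, t1 < Mb → t2 < Mb → t1 < t2 → f t1 < f t2 := by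
          intro t1 t2 h1 h2 h12
          have a1 : f t1 ≤ t1 * (KZ + 1) + KZ := hf2 t1 h1
          have a2 : t2 * (KZ + 1) ≤ f t2 := hf1 t2 h2
          have h := Nat.mul_le_mul_right (KZ + 1) (Nat.succ_le_of_lt h12)
          have e : (t1 + 1) * (KZ + 1) = t1 * (KZ + 1) + KZ + 1 := by ring
          rw [e] at h
          omega
        calc Mb = (Finset.range Mb).card := (Finset.card_range Mb).symm
          _ ≤ ((Finset.range n).filter (fun i => z (m + i) ∈ M.Dset)).card := by
              apply Finset.card_le_card_of_injOn f
              · intro t' ht'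
                exact hf3 t' (Finset.mem_range.1 ht')
              · intro t1 h1 t2 h2 hf12
                by_contra hne12
                rcases lt_or_gt_of_ne hne12 with h | h
                · exact absurd hf12 (ne_of_lt (key t1 t2 (Finset.mem_range.1 (by simpa using h1)) (Finset.mem_range.1 (by simpa using h2)) h))
                · exact absurd hf12.symm (ne_of_lt (key t2 t1 (Finset.mem_range.1 (by simpa using h2)) (Finset.mem_range.1 (by simpa using h1)) h))
      calc intervalLen (M.Iword u)
          = intervalLen (M.Iword (fun i : Fin (n + 1) => z (m + (i : ℕ)))) := by rw [hueq]
        _ ≤ γ' ^ ((Finset.range n).filter (fun i => z (m + i) ∈ M.Dset)).card :=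
            main z hzSFT m n
        _ ≤ γ' ^ Mb := pow_le_pow_of_le_one hγ'0 (le_of_lt hγ'1) hcnt
        _ < ε := hMb
    · -- some symbol outside A0: I_u is a point
      push_neg at hall
      obtain ⟨i0, hi0⟩ := hall
      have hchu : List.Chain' M.Vp (List.ofFn u) := M.chain_ofFn u z hzSFT m hzm
      have hss : (M.Iword u).Subsingleton := by
        rw [M.Iword_eq]
        apply M.Iw2_subsing
        · rw [← List.concat_eq_append, ← List.ofFn_succ' u]
          exact hchu
        · rcases eq_or_ne i0 (Fin.last n) with rfl | hne
          · exact Or.inr hi0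
          · left
            refine ⟨u i0, ?_, hi0⟩
            rw [List.mem_ofFn]
            have hi0lt : (i0 : ℕ) < n := by
              rcases Nat.lt_succ_iff_lt_or_eq.1 i0.isLt with h | h
              · exact h
              · exact absurd (Fin.ext h) hne
            exact ⟨⟨(i0 : ℕ), hi0lt⟩, congrArg u (Fin.ext rfl)⟩
      rw [intervalLen_subsingleton hss]
      exact hε
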